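/- Barrier computation: on ℝ² \ P with P = {(x₁,0): x₁ ≤ 0}, let U₀ = (1/√2)√(x₁+r), r = |X|, and for α ∈ (0, 1/2) set V := U₀ − U₀^{1+2α}. Then V ≥ 0 on {r ≤ 1} \ P and ΔV ≤ −c r^{α − 3/2} on {0 < r < 1, X ∉ P} for some constant c = c(α) > 0. -/

import Mathlib

open Real


/-- Laplacian of a function on `ℝ²` as the sum of the two pure second derivatives. -/
noncomputable def lap2 (f : ℝ × ℝ → ℝ) (p : ℝ × ℝ) : ℝ :=
  iteratedDeriv 2 (fun t : ℝ => f (t, p.2)) p.1 +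
  iteratedDeriv 2 (fun t : ℝ => f (p.1, t)) p.2

namespace Stmt10Aux

noncomputable def UU (x y : ℝ) : ℝ := (1 / Real.sqrt 2) * Real.sqrt (x + Real.sqrt (x ^ 2 + y ^ 2))

lemma sqpos {x y : ℝ} (h : ¬(y = 0 ∧ x ≤ 0)) : 0 < x ^ 2 + y ^ 2 := by
  rcases eq_or_ne y 0 with hy | hy
  · have hx : 0 < x := lt_of_not_ge fun hx => h ⟨hy, hx⟩
    nlinarith
  · nlinarith [sq_nonneg x, sq_pos_of_ne_zero hy]

lemma rpos {x y : ℝ} (h : ¬(y = 0 ∧ x ≤ 0)) : 0 < Real.sqrt (x ^ 2 + y ^ 2) :=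
  Real.sqrt_pos.2 (sqpos h)

lemma rsq {x y : ℝ} : Real.sqrt (x ^ 2 + y ^ 2) ^ 2 = x ^ 2 + y ^ 2 :=
  Real.sq_sqrt (by positivity)

lemma wpos {x y : ℝ} (h : ¬(y = 0 ∧ x ≤ 0)) : 0 < x + Real.sqrt (x ^ 2 + y ^ 2) := by
  rcases le_or_gt x 0 with hx | hx
  · have hy : y ≠ 0 := fun hy => h ⟨hy, hx⟩
    have h1 : |x| < Real.sqrt (x ^ 2 + y ^ 2) := by
      rw [show x ^ 2 + y ^ 2 = |x| ^ 2 + y ^ 2 by rw [sq_abs]]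
      nlinarith [Real.sq_sqrt (show (0:ℝ) ≤ |x| ^ 2 + y ^ 2 by positivity),
        Real.sqrt_nonneg (|x| ^ 2 + y ^ 2), abs_nonneg x, sq_pos_of_ne_zero hy]
    nlinarith [abs_nonneg x, neg_abs_le x]
  · have := Real.sqrt_nonneg (x ^ 2 + y ^ 2); linarith

lemma UU_pos {x y : ℝ} (h : ¬(y = 0 ∧ x ≤ 0)) : 0 < UU x y := by
  have h2 : (0:ℝ) < Real.sqrt 2 := by positivity
  exact mul_pos (by positivity) (Real.sqrt_pos.2 (wpos h))

lemma UU_sq {x y : ℝ} (h : ¬(y = 0 ∧ x ≤ 0)) :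
    UU x y ^ 2 = (x + Real.sqrt (x ^ 2 + y ^ 2)) / 2 := by
  have h2 : Real.sqrt 2 ^ 2 = 2 := Real.sq_sqrt (by norm_num)
  have hw : Real.sqrt (x + Real.sqrt (x ^ 2 + y ^ 2)) ^ 2 = x + Real.sqrt (x ^ 2 + y ^ 2) :=
    Real.sq_sqrt (wpos h).le
  have h2' : Real.sqrt 2 ≠ 0 := by positivity
  rw [UU]; field_simp [mul_pow, hw, h2]
  rw [hw, h2]; ring

/-- x-derivative of U. -/
lemma hasDerivAt_U_x {y : ℝ} (t : ℝ) (h : ¬(y = 0 ∧ t ≤ 0)) :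
    HasDerivAt (fun t => UU t y) (UU t y / (2 * Real.sqrt (t ^ 2 + y ^ 2))) t := by
  have hr := rpos h
  have hw := wpos h
  have h1 : HasDerivAt (fun t : ℝ => t ^ 2 + y ^ 2) (2 * t) t := by
    simpa using ((hasDerivAt_pow 2 t).add_const (y ^ 2))
  have h2 : HasDerivAt (fun t : ℝ => Real.sqrt (t ^ 2 + y ^ 2))
      (2 * t / (2 * Real.sqrt (t ^ 2 + y ^ 2))) t := h1.sqrt (sqpos h).ne'
  have h3 := ((hasDerivAt_id t).add h2).sqrt hw.ne'
  have h4 := h3.const_mul (1 / Real.sqrt 2)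
  refine h4.congr_deriv ?_
  symm
  have h2' : Real.sqrt 2 ≠ 0 := by positivity
  have hsw : Real.sqrt (t + Real.sqrt (t ^ 2 + y ^ 2)) ^ 2 = t + Real.sqrt (t ^ 2 + y ^ 2) :=
    Real.sq_sqrt hw.le
  have hsw' : Real.sqrt (t + Real.sqrt (t ^ 2 + y ^ 2)) ≠ 0 := by positivity
  rw [UU]
  simp only [Pi.add_apply, id_eq]
  field_simp
  linear_combination hsw

/-- y-derivative of U. -/
lemma hasDerivAt_U_y {x : ℝ} (s : ℝ) (h : ¬(s = 0 ∧ x ≤ 0)) :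
    HasDerivAt (fun s => UU x s) (s / (4 * Real.sqrt (x ^ 2 + s ^ 2) * UU x s)) s := by
  have hsq : 0 < x ^ 2 + s ^ 2 := sqpos h
  have hr : 0 < Real.sqrt (x ^ 2 + s ^ 2) := rpos h
  have hw : 0 < x + Real.sqrt (x ^ 2 + s ^ 2) := wpos h
  have h1 : HasDerivAt (fun s : ℝ => x ^ 2 + s ^ 2) (2 * s) s := by
    simpa using ((hasDerivAt_pow 2 s).const_add (x ^ 2))
  have h2 := h1.sqrt hsq.ne'
  have h3 := ((hasDerivAt_const s x).add h2).sqrt hw.ne'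
  have h4 := h3.const_mul (1 / Real.sqrt 2)
  refine h4.congr_deriv ?_
  symm
  have h2' : Real.sqrt 2 ≠ 0 := by positivity
  have hq2 : Real.sqrt 2 ^ 2 = 2 := Real.sq_sqrt (by norm_num)
  have hsw : Real.sqrt (x + Real.sqrt (x ^ 2 + s ^ 2)) ^ 2 = x + Real.sqrt (x ^ 2 + s ^ 2) :=
    Real.sq_sqrt hw.le
  have hsw' : Real.sqrt (x + Real.sqrt (x ^ 2 + s ^ 2)) ≠ 0 := by positivity
  rw [UU]
  simp only [Pi.add_apply]
  field_simp
  linear_combination 2 * s * hq2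


lemma rpow_shift {u : ℝ} (hu : 0 < u) (a : ℝ) : u ^ (a + 1) = u ^ a * u :=
  Real.rpow_add_one hu.ne' a

lemma hBA {x y : ℝ} (h : ¬(y = 0 ∧ x ≤ 0)) (α : ℝ) :
    UU x y ^ (2*α) = UU x y ^ (2*α - 1) * UU x y := by
  rw [← rpow_shift (UU_pos h) (2*α - 1), show (2*α - 1 + 1 : ℝ) = 2*α by ring]

lemma hCA {x y : ℝ} (h : ¬(y = 0 ∧ x ≤ 0)) (α : ℝ) :
    UU x y ^ (1 + 2*α) = UU x y ^ (2*α - 1) * UU x y * UU x y := by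
  rw [← rpow_shift (UU_pos h) (2*α - 1), ← rpow_shift (UU_pos h) (2*α - 1 + 1),
    show (2*α - 1 + 1 + 1 : ℝ) = 1 + 2*α by ring]

/-- x-derivative of V. -/
lemma hasDerivAt_V_x (α : ℝ) {y : ℝ} (t : ℝ) (h : ¬(y = 0 ∧ t ≤ 0)) :
    HasDerivAt (fun t => UU t y - UU t y ^ (1 + 2*α))
      ((1 - (1 + 2*α) * UU t y ^ (2*α)) * (UU t y / (2 * Real.sqrt (t ^ 2 + y ^ 2)))) t := by
  have hU := hasDerivAt_U_x t h
  have hUp := hU.rpow_const (p := 1 + 2*α) (Or.inl (UU_pos h).ne')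
  refine (hU.sub hUp).congr_deriv ?_
  rw [show (1 + 2*α - 1 : ℝ) = 2*α by ring]
  ring

/-- y-derivative of V. -/
lemma hasDerivAt_V_y (α : ℝ) {x : ℝ} (s : ℝ) (h : ¬(s = 0 ∧ x ≤ 0)) :
    HasDerivAt (fun s => UU x s - UU x s ^ (1 + 2*α))
      ((1 - (1 + 2*α) * UU x s ^ (2*α)) * (s / (4 * Real.sqrt (x ^ 2 + s ^ 2) * UU x s))) s := by
  have hU := hasDerivAt_U_y s h
  have hUp := hU.rpow_const (p := 1 + 2*α) (Or.inl (UU_pos h).ne')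
  refine (hU.sub hUp).congr_deriv ?_
  rw [show (1 + 2*α - 1 : ℝ) = 2*α by ring]
  ring

/-- second x-derivative: derivative of the first-derivative formula. -/
lemma hasDerivAt_g1 (α : ℝ) {y : ℝ} (x : ℝ) (h : ¬(y = 0 ∧ x ≤ 0)) :
    HasDerivAt (fun t => (1 - (1 + 2*α) * UU t y ^ (2*α)) * (UU t y / (2 * Real.sqrt (t ^ 2 + y ^ 2))))
      ((UU x y * (Real.sqrt (x ^ 2 + y ^ 2) - 2*x)
          - (1 + 2*α) * UU x y ^ (1 + 2*α) * ((1 + 2*α) * Real.sqrt (x ^ 2 + y ^ 2) - 2*x))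
        / (4 * Real.sqrt (x ^ 2 + y ^ 2) ^ 3)) x := by
  have hU0 := UU_pos h
  have hr := rpos h
  have hU := hasDerivAt_U_x x h
  have hA := hU.rpow_const (p := 2*α) (Or.inl hU0.ne')
  have hfac := (hasDerivAt_const x (1:ℝ)).sub (hA.const_mul (1 + 2*α))
  have h1 : HasDerivAt (fun t : ℝ => t ^ 2 + y ^ 2) (2 * x) x := by
    simpa using ((hasDerivAt_pow 2 x).add_const (y ^ 2))
  have h2 := h1.sqrt (sqpos h).ne'
  have hden := h2.const_mul (2:ℝ)
  have hquot := hU.div hden (by positivity)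
  have hprod := hfac.mul hquot
  refine hprod.congr_deriv ?_
  symm
  simp only [Pi.sub_apply, Pi.mul_apply, Pi.div_apply, id_eq]
  rw [hBA h α, hCA h α]
  have hrne : Real.sqrt (x ^ 2 + y ^ 2) ≠ 0 := hr.ne'
  field_simp
  ring


/-- second y-derivative formula: equals −β(β−1)U^{β−2}/(4r) − (the second x-derivative). -/
lemma hasDerivAt_g2 (α : ℝ) {x : ℝ} (y : ℝ) (h : ¬(y = 0 ∧ x ≤ 0)) :
    HasDerivAt (fun s => (1 - (1 + 2*α) * UU x s ^ (2*α)) * (s / (4 * Real.sqrt (x ^ 2 + s ^ 2) * UU x s)))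
      (-((1 + 2*α) * (2*α)) * UU x y ^ (2*α - 1) / (4 * Real.sqrt (x ^ 2 + y ^ 2))
        - (UU x y * (Real.sqrt (x ^ 2 + y ^ 2) - 2*x)
          - (1 + 2*α) * UU x y ^ (1 + 2*α) * ((1 + 2*α) * Real.sqrt (x ^ 2 + y ^ 2) - 2*x))
        / (4 * Real.sqrt (x ^ 2 + y ^ 2) ^ 3)) y := by
  have hU0 := UU_pos h
  have hr := rpos h
  have hU := hasDerivAt_U_y y h
  have hA := hU.rpow_const (p := 2*α) (Or.inl hU0.ne')
  have hfac := (hasDerivAt_const y (1:ℝ)).sub (hA.const_mul (1 + 2*α))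
  have h1 : HasDerivAt (fun s : ℝ => x ^ 2 + s ^ 2) (2 * y) y := by
    simpa using ((hasDerivAt_pow 2 y).const_add (x ^ 2))
  have h2 := h1.sqrt (sqpos h).ne'
  have hden := (h2.const_mul (4:ℝ)).mul hU
  have hquot := (hasDerivAt_id y).div hden (mul_pos (mul_pos (by norm_num) hr) hU0).ne'
  have hprod := hfac.mul hquot
  refine hprod.congr_deriv ?_
  symm
  simp only [Pi.sub_apply, Pi.mul_apply, Pi.div_apply, id_eq]
  rw [hBA h α, hCA h α]
  have hrne : Real.sqrt (x ^ 2 + y ^ 2) ≠ 0 := hr.ne'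
  have hy2 : y ^ 2 = Real.sqrt (x ^ 2 + y ^ 2) ^ 2 - x ^ 2 := by
    have := rsq (x := x) (y := y); linarith
  have hu2 : UU x y ^ 2 = (x + Real.sqrt (x ^ 2 + y ^ 2)) / 2 := UU_sq h
  set R_ := Real.sqrt (x ^ 2 + y ^ 2) with hR
  set U_ := UU x y with hUdef
  set A_ := UU x y ^ (2*α-1) with hA2
  field_simp
  linear_combination ((8192*R_^7*U_^4 + 2048*R_^8*U_^2 - 8192*A_*R_^7*U_^5 - 2048*A_*R_^8*U_^3 - 16384*α*A_*R_^7*U_^5 + 8192*α^2*A_*R_^8*U_^3) + (4*U_*A_*R_*α^2) + (-1*U_*A_*R_) + (-2048*U_^2*R_^8) + (4*U_^2) + (-8*U_^3*A_*α) + (-8192*U_^3*A_*R_^8*α^2) + (2048*U_^3*A_*R_^8) + (-4*U_^3*A_) + (-8192*U_^4*R_^7) + (16384*U_^5*A_*R_^7*α) + (8192*U_^5*A_*R_^7) + (1*R_)) * hy2 + ((16384*R_^7*U_^4*x + 4096*R_^8*U_^2*x - 8192*R_^8*U_^4 - 4096*R_^9*U_^2 - 16384*A_*R_^7*U_^5*x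 - 4096*A_*R_^8*U_^3*x + 8192*A_*R_^8*U_^5 + 4096*A_*R_^9*U_^3 - 32768*α*A_*R_^7*U_^5*x + 32768*α*A_*R_^8*U_^5 + 16384*α^2*A_*R_^8*U_^3*x + 32768*α^2*A_*R_^8*U_^5 - 16384*α^2*A_*R_^9*U_^3) + (-8*U_*A_*R_^2*α^2) + (-4*U_^2*R_) + (8*U_^2*x) + (16*U_^3*A_*R_*α) + (-16*U_^3*A_*x*α) + (16*U_^3*A_*R_*α^2) + (16384*U_^3*A_*R_^9*α^2) + (4*U_^3*A_*R_) + (-8*U_^3*A_*x) + (-16384*U_^4*R_^7*x) + (8192*U_^4*R_^8) + (32768*U_^5*A_*R_^7*x*α) + (-32768*U_^5*A_*R_^8*α) + (-32768*U_^5*A_*R_^8*α^2) + (16384*U_^5*A_*R_^7*x) + (-8192*U_^5*A_*R_^8) + (2*R_*x) + (-2*R_^2) + (8*U_*A_*R_*x*α^2) + (-2*U_*A_*R_*x) + (2*U_*A_*R_^2) + (-4096*U_^2*R_^8*x) + (4096*U_^2*R_^9) + (-16384*U_^3*A_*R_^8*x*α^2) + (4096*U_^3*A_*R_^8*x) + (-4096*U_^3*A_*R_^9))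 * hu2


lemma isOpen_sliceX (y : ℝ) : IsOpen {t : ℝ | ¬(y = 0 ∧ t ≤ 0)} := by
  rcases eq_or_ne y 0 with hy | hy
  · have : {t : ℝ | ¬(y = 0 ∧ t ≤ 0)} = Set.Ioi 0 := by
      ext t; simp [hy, Set.mem_Ioi, not_le]
    rw [this]; exact isOpen_Ioi
  · have : {t : ℝ | ¬(y = 0 ∧ t ≤ 0)} = Set.univ := by
      ext t; simp [hy]
    rw [this]; exact isOpen_univ

lemma isOpen_sliceY (x : ℝ) : IsOpen {s : ℝ | ¬(s = 0 ∧ x ≤ 0)} := by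
  rcases le_or_gt x 0 with hx | hx
  · have : {s : ℝ | ¬(s = 0 ∧ x ≤ 0)} = {(0:ℝ)}ᶜ := by
      ext s; simp [hx]
    rw [this]; exact isOpen_compl_singleton
  · have : {s : ℝ | ¬(s = 0 ∧ x ≤ 0)} = Set.univ := by
      ext s; simp [hx.not_ge]
    rw [this]; exact isOpen_univ

lemma lap2_V (α : ℝ) {x y : ℝ} (h : ¬(y = 0 ∧ x ≤ 0)) :
    lap2 (fun q => (1 / Real.sqrt 2) * Real.sqrt (q.1 + Real.sqrt (q.1 ^ 2 + q.2 ^ 2))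
        - ((1 / Real.sqrt 2) * Real.sqrt (q.1 + Real.sqrt (q.1 ^ 2 + q.2 ^ 2))) ^ (1 + 2*α)) (x, y)
      = -((1 + 2*α) * (2*α)) * UU x y ^ (2*α - 1) / (4 * Real.sqrt (x ^ 2 + y ^ 2)) := by
  have hkey : lap2 (fun q => UU q.1 q.2 - UU q.1 q.2 ^ (1 + 2*α)) (x, y)
      = -((1 + 2*α) * (2*α)) * UU x y ^ (2*α - 1) / (4 * Real.sqrt (x ^ 2 + y ^ 2)) := by
    rw [lap2]
    have hit : ∀ f : ℝ → ℝ, ∀ t : ℝ, iteratedDeriv 2 f t = deriv (deriv f) t := by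
      intro f t
      rw [iteratedDeriv_succ, iteratedDeriv_one]
    simp only [hit]
    -- x-direction
    have hevx : deriv (fun t => UU t y - UU t y ^ (1 + 2*α))
        =ᶠ[nhds x] (fun t => (1 - (1 + 2*α) * UU t y ^ (2*α)) * (UU t y / (2 * Real.sqrt (t ^ 2 + y ^ 2)))) := by
      refine Filter.eventuallyEq_of_mem ((isOpen_sliceX y).mem_nhds h) (fun t ht => ?_)
      exact (hasDerivAt_V_x α t ht).deriv
    have hdx : deriv (deriv (fun t => UU t y - UU t y ^ (1 + 2*α))) x
        = (UU x y * (Real.sqrt (x ^ 2 + y ^ 2) - 2*x)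
          - (1 + 2*α) * UU x y ^ (1 + 2*α) * ((1 + 2*α) * Real.sqrt (x ^ 2 + y ^ 2) - 2*x))
          / (4 * Real.sqrt (x ^ 2 + y ^ 2) ^ 3) := by
      rw [hevx.deriv_eq]
      exact (hasDerivAt_g1 α x h).deriv
    -- y-direction
    have hevy : deriv (fun s => UU x s - UU x s ^ (1 + 2*α))
        =ᶠ[nhds y] (fun s => (1 - (1 + 2*α) * UU x s ^ (2*α)) * (s / (4 * Real.sqrt (x ^ 2 + s ^ 2) * UU x s))) := by
      refine Filter.eventuallyEq_of_mem ((isOpen_sliceY x).mem_nhds ?_) (fun s hs => ?_)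
      · exact h
      · exact (hasDerivAt_V_y α s hs).deriv
    have hdy : deriv (deriv (fun s => UU x s - UU x s ^ (1 + 2*α))) y
        = -((1 + 2*α) * (2*α)) * UU x y ^ (2*α - 1) / (4 * Real.sqrt (x ^ 2 + y ^ 2))
        - (UU x y * (Real.sqrt (x ^ 2 + y ^ 2) - 2*x)
          - (1 + 2*α) * UU x y ^ (1 + 2*α) * ((1 + 2*α) * Real.sqrt (x ^ 2 + y ^ 2) - 2*x))
          / (4 * Real.sqrt (x ^ 2 + y ^ 2) ^ 3) := by
      rw [hevy.deriv_eq]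
      exact (hasDerivAt_g2 α y h).deriv
    rw [show (fun t => (fun q : ℝ × ℝ => UU q.1 q.2 - UU q.1 q.2 ^ (1 + 2*α)) (t, (x, y).2))
        = fun t => UU t y - UU t y ^ (1 + 2*α) from rfl,
      show (fun s => (fun q : ℝ × ℝ => UU q.1 q.2 - UU q.1 q.2 ^ (1 + 2*α)) ((x, y).1, s))
        = fun s => UU x s - UU x s ^ (1 + 2*α) from rfl]
    rw [hdx, hdy]
    ring
  exact hkey

end Stmt10Aux

/-- barrier computation: on `ℝ²` minus the slit
`P = {(x₁,0): x₁ ≤ 0}`, with `U₀ = (1/√2)√(x₁+r)`, `r = |X|`, and `α ∈ (0,1/2)`,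
the barrier `V = U₀ − U₀^{1+2α}` satisfies `V ≥ 0` on `{r ≤ 1} \ P` and
`ΔV ≤ −c·r^{α−3/2}` on `{0 < r < 1} \ P` for some `c = c(α) > 0`. -/
theorem stmt10 (α : ℝ) (hα : α ∈ Set.Ioo (0:ℝ) (1/2)) :
    ∃ c > (0:ℝ),
      (∀ p : ℝ × ℝ, ¬(p.2 = 0 ∧ p.1 ≤ 0) → Real.sqrt (p.1 ^ 2 + p.2 ^ 2) ≤ 1 →
        0 ≤ (1 / Real.sqrt 2) * Real.sqrt (p.1 + Real.sqrt (p.1 ^ 2 + p.2 ^ 2))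
            - ((1 / Real.sqrt 2) * Real.sqrt (p.1 + Real.sqrt (p.1 ^ 2 + p.2 ^ 2))) ^ (1 + 2*α)) ∧
      (∀ p : ℝ × ℝ, ¬(p.2 = 0 ∧ p.1 ≤ 0) →
        0 < Real.sqrt (p.1 ^ 2 + p.2 ^ 2) → Real.sqrt (p.1 ^ 2 + p.2 ^ 2) < 1 →
        lap2 (fun q => (1 / Real.sqrt 2) * Real.sqrt (q.1 + Real.sqrt (q.1 ^ 2 + q.2 ^ 2))
            - ((1 / Real.sqrt 2) * Real.sqrt (q.1 + Real.sqrt (q.1 ^ 2 + q.2 ^ 2))) ^ (1 + 2*α)) p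
          ≤ -c * Real.sqrt (p.1 ^ 2 + p.2 ^ 2) ^ (α - 3/2)) := by
  obtain ⟨hα0, hα1⟩ := hα
  refine ⟨α * (1 + 2*α) / 2, by nlinarith, ?_, ?_⟩
  · -- nonnegativity
    rintro ⟨x, y⟩ hp hr1
    dsimp only at hp hr1 ⊢
    have hU0 := Stmt10Aux.UU_pos hp
    have hu2 := Stmt10Aux.UU_sq hp
    have hxle : x ≤ Real.sqrt (x ^ 2 + y ^ 2) := by
      calc x ≤ |x| := le_abs_self _
        _ = Real.sqrt (x ^ 2) := (Real.sqrt_sq_eq_abs x).symm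
        _ ≤ _ := Real.sqrt_le_sqrt (by nlinarith [sq_nonneg y])
    have hU1 : Stmt10Aux.UU x y ≤ 1 := by nlinarith
    have hle := Real.rpow_le_rpow_of_exponent_ge hU0 hU1 (show (1:ℝ) ≤ 1 + 2*α by linarith)
    rw [Real.rpow_one] at hle
    show 0 ≤ Stmt10Aux.UU x y - Stmt10Aux.UU x y ^ (1 + 2*α)
    linarith
  · -- Laplacian bound
    rintro ⟨x, y⟩ hp hr0 hr1
    dsimp only at hp hr0 hr1 ⊢
    rw [Stmt10Aux.lap2_V α hp]
    have hU0 := Stmt10Aux.UU_pos hp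
    have hu2 := Stmt10Aux.UU_sq hp
    have hrpos : 0 < Real.sqrt (x ^ 2 + y ^ 2) := hr0
    set r := Real.sqrt (x ^ 2 + y ^ 2) with hrdef
    have hxle : x ≤ r := by
      rw [hrdef]
      calc x ≤ |x| := le_abs_self _
        _ = Real.sqrt (x ^ 2) := (Real.sqrt_sq_eq_abs x).symm
        _ ≤ _ := Real.sqrt_le_sqrt (by nlinarith [sq_nonneg y])
    have hUle : Stmt10Aux.UU x y ≤ Real.sqrt r := by
      nlinarith [Real.sq_sqrt hrpos.le, Real.sqrt_nonneg r]
    have hA : r ^ (α - 1/2) ≤ Stmt10Aux.UU x y ^ (2*α - 1) := by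
      have h1 := Real.rpow_le_rpow_of_nonpos hU0 hUle
        (show 2*α - 1 ≤ 0 by linarith)
      have h2 : Real.sqrt r ^ (2*α - 1) = r ^ (α - 1/2) := by
        rw [Real.sqrt_eq_rpow, ← Real.rpow_mul hrpos.le,
          show (1/2) * (2*α - 1) = α - 1/2 by ring]
      rw [h2] at h1
      exact h1
    have hABr : r ^ (α - 3/2) * r ≤ Stmt10Aux.UU x y ^ (2*α - 1) := by
      rw [show (α - 1/2 : ℝ) = α - 3/2 + 1 by ring, Real.rpow_add_one hrpos.ne'] at hA
      exact hA
    have hBpos : 0 < r ^ (α - 3/2) := Real.rpow_pos_of_pos hrpos _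
    rw [div_le_iff₀ (by positivity : (0:ℝ) < 4 * r)]
    nlinarith [mul_le_mul_of_nonneg_left hABr
      (show (0:ℝ) ≤ 2*α*(1 + 2*α) by nlinarith)]
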